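/- Fix an integer k ≥ 1. There exists a constant d_k > 0 such that for all integers 1 ≤ N ≤ M (M possibly ∞) and every n ∈ ℤ∖{0}: Σ_{n₁+⋯+n_k = n, 1 ≤ |n_j| ≤ M, max_j |n_j| > N} ∏_{j=1}^k (1/n_j²) ≤ d_k / max(N, |n|)². -/

import Mathlib

noncomputable section

open Finset

private lemma sum_range_inv_sq_le (n : ℕ) :
    ∑ i ∈ range n, (1 : ℝ) / ((i + 1 : ℕ) : ℝ) ^ 2 ≤ 2 - 2 / (n + 1) := by
  induction n with
  | zero => norm_num
  | succ n ih =>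
    rw [sum_range_succ]
    have h1 : (0:ℝ) < (n:ℝ) + 1 := by positivity
    have h2 : (0:ℝ) < (n:ℝ) + 2 := by positivity
    have key : (1 : ℝ) / ((n + 1 : ℕ) : ℝ) ^ 2 ≤ 2 / ((n:ℝ) + 1) - 2 / ((n:ℝ) + 2) := by
      rw [div_sub_div _ _ (ne_of_gt h1) (ne_of_gt h2)]
      push_cast
      rw [div_le_div_iff₀ (by positivity) (by positivity)]
      nlinarith [sq_nonneg ((n:ℝ))]
    have h3 : ((n:ℝ) + 1 + 1) = (n:ℝ) + 2 := by ring
    push_cast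
    push_cast at ih key
    rw [h3]
    linarith

private lemma sum_nat_inv_sq_le (B : Finset ℕ) (hB : 0 ∉ B) :
    ∑ i ∈ B, (1 : ℝ) / (i : ℝ) ^ 2 ≤ 2 := by
  classical
  set m0 : ℕ := B.sup id with hm0
  have hsub : B ⊆ (range m0).image (fun x : ℕ => x + 1) := by
    intro i hi
    have hi0 : i ≠ 0 := fun h => hB (h ▸ hi)
    obtain ⟨j, rfl⟩ := Nat.exists_eq_succ_of_ne_zero hi0
    have hle : j + 1 ≤ m0 := Finset.le_sup (f := id) hi
    exact Finset.mem_image.2 ⟨j, Finset.mem_range.2 (lt_of_lt_of_le (Nat.lt_succ_self j) hle),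
      rfl⟩
  calc ∑ i ∈ B, (1 : ℝ) / (i : ℝ) ^ 2
      ≤ ∑ i ∈ (range m0).image (fun x : ℕ => x + 1), (1 : ℝ) / (i : ℝ) ^ 2 :=
        Finset.sum_le_sum_of_subset_of_nonneg hsub (fun i _ _ => by positivity)
    _ = ∑ j ∈ range m0, (1 : ℝ) / ((j + 1 : ℕ) : ℝ) ^ 2 :=
        Finset.sum_image (fun x _ y _ h => by omega)
    _ ≤ 2 - 2 / ((m0 : ℝ) + 1) := sum_range_inv_sq_le _
    _ ≤ 2 := by
        have : (0:ℝ) ≤ 2 / ((m0 : ℝ) + 1) := by positivity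
        linarith

private lemma sum_int_inv_sq_le (A : Finset ℤ) (hA : 0 ∉ A) :
    ∑ m ∈ A, (1 : ℝ) / (m : ℝ) ^ 2 ≤ 4 := by
  classical
  rw [← Finset.sum_filter_add_sum_filter_not A (fun m => 0 < m)]
  have hpos : ∑ m ∈ A.filter (fun m => 0 < m), (1 : ℝ) / (m : ℝ) ^ 2 ≤ 2 := by
    have h : ∑ m ∈ A.filter (fun m => 0 < m), (1 : ℝ) / (m : ℝ) ^ 2
        = ∑ i ∈ (A.filter (fun m => 0 < m)).image Int.toNat, (1 : ℝ) / (i : ℝ) ^ 2 := by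
      rw [Finset.sum_image (fun x hx y hy h => by
        have hx' := (Finset.mem_filter.1 hx).2
        have hy' := (Finset.mem_filter.1 hy).2
        have h' : x.toNat = y.toNat := by exact_mod_cast h
        omega)]
      refine Finset.sum_congr rfl (fun m hm => ?_)
      have hm' := (Finset.mem_filter.1 hm).2
      have h0 : ((m.toNat : ℕ) : ℝ) = (m : ℝ) := by
        exact_mod_cast congrArg (Int.cast : ℤ → ℝ) (Int.toNat_of_nonneg hm'.le)
      rw [h0]
    rw [h]
    refine sum_nat_inv_sq_le _ (fun hc => ?_)
    obtain ⟨m, hm, hm0⟩ := Finset.mem_image.1 hc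
    have := (Finset.mem_filter.1 hm).2
    omega
  have hneg : ∑ m ∈ A.filter (fun m => ¬ 0 < m), (1 : ℝ) / (m : ℝ) ^ 2 ≤ 2 := by
    have h : ∑ m ∈ A.filter (fun m => ¬ 0 < m), (1 : ℝ) / (m : ℝ) ^ 2
        = ∑ i ∈ ((A.filter (fun m => ¬ 0 < m)).image (fun m => (-m).toNat) : Finset ℕ),
            (1 : ℝ) / (i : ℝ) ^ 2 := by
      rw [Finset.sum_image (fun x hx y hy h => by
        have hx' := (Finset.mem_filter.1 hx).2
        have hy' := (Finset.mem_filter.1 hy).2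
        have h' : (-x).toNat = (-y).toNat := by exact_mod_cast h
        omega)]
      refine Finset.sum_congr rfl (fun m hm => ?_)
      have hm' := (Finset.mem_filter.1 hm).2
      have hnn : (0:ℤ) ≤ -m := by omega
      have h0 : (((-m).toNat : ℕ) : ℝ) = -(m : ℝ) := by
        exact_mod_cast congrArg (Int.cast : ℤ → ℝ) (Int.toNat_of_nonneg hnn)
      rw [h0]
      ring
    rw [h]
    refine sum_nat_inv_sq_le _ (fun hc => ?_)
    obtain ⟨m, hm, hm0⟩ := Finset.mem_image.1 hc
    have h1 := (Finset.mem_filter.1 hm).1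
    have h2 := (Finset.mem_filter.1 hm).2
    have : m ≠ 0 := fun h => hA (h ▸ h1)
    omega
  linarith

/-- Step C: the sum over tuples with fixed total `n` and nonzero entries of the product of
`1/n_j²` over all indices except `i` is at most `4^(k-1)`. -/
private lemma sum_prod_erase_le {k : ℕ} (P : (Fin k → ℤ) → Prop) (n : ℤ)
    (hP : ∀ v, P v → (∑ j, v j) = n ∧ ∀ j, v j ≠ 0) (i : Fin k)
    (t : Finset {v : Fin k → ℤ // P v}) :
    ∑ v ∈ t, ∏ j ∈ univ.erase i, (1 : ℝ) / ((v : Fin k → ℤ) j : ℝ) ^ 2 ≤ 4 ^ (k - 1) := by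
  classical
  set F : {v : Fin k → ℤ // P v} → (Fin k → ℤ) := fun v => Function.update v.1 i 0 with hFdef
  have hFinj : ∀ x ∈ t, ∀ y ∈ t, F x = F y → x = y := by
    intro x _ y _ hxy
    have h1 : ∀ j, j ≠ i → x.1 j = y.1 j := by
      intro j hj
      have := congrFun hxy j
      simpa [hFdef, Function.update_of_ne hj] using this
    have hx := (hP x.1 x.2).1
    have hy := (hP y.1 y.2).1
    rw [← Finset.add_sum_erase univ x.1 (mem_univ i)] at hx
    rw [← Finset.add_sum_erase univ y.1 (mem_univ i)] at hy
    have hsame : ∑ j ∈ univ.erase i, x.1 j = ∑ j ∈ univ.erase i, y.1 j :=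
      Finset.sum_congr rfl (fun j hj => h1 j (Finset.ne_of_mem_erase hj))
    have h2 : x.1 i = y.1 i := by rw [hsame] at hx; linarith [hx, hy]
    refine Subtype.ext (funext (fun j => ?_))
    by_cases hj : j = i
    · rw [hj]; exact h2
    · exact h1 j hj
  have hsumeq : ∑ v ∈ t, ∏ j ∈ univ.erase i, (1 : ℝ) / ((v : Fin k → ℤ) j : ℝ) ^ 2
      = ∑ u ∈ t.image F, ∏ j ∈ univ.erase i, (1 : ℝ) / ((u j : ℝ)) ^ 2 := by
    rw [Finset.sum_image hFinj]
    refine Finset.sum_congr rfl (fun v _ => Finset.prod_congr rfl (fun j hj => ?_))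
    rw [hFdef]
    simp [Function.update_of_ne (Finset.ne_of_mem_erase hj)]
  rw [hsumeq]
  set U := t.image F with hU
  set A : Fin k → Finset ℤ := fun j => U.image (fun u => u j) with hA
  set g : Fin k → ℤ → ℝ := fun j m => if j = i then 1 else 1 / (m : ℝ) ^ 2 with hg
  have hgnn : ∀ j m, 0 ≤ g j m := by
    intro j m; rw [hg]; dsimp only; split <;> positivity
  have hprodg : ∀ u : Fin k → ℤ,
      ∏ j ∈ univ.erase i, (1 : ℝ) / ((u j : ℝ)) ^ 2 = ∏ j, g j (u j) := by
    intro u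
    rw [← Finset.mul_prod_erase univ (fun j => g j (u j)) (mem_univ i)]
    have h1 : g i (u i) = 1 := by rw [hg]; simp
    rw [h1, one_mul]
    exact Finset.prod_congr rfl (fun j hj => by
      rw [hg]; simp [Finset.ne_of_mem_erase hj])
  have hsub : U ⊆ Fintype.piFinset A := by
    intro u hu
    rw [Fintype.mem_piFinset]
    intro j
    exact Finset.mem_image_of_mem _ hu
  calc ∑ u ∈ U, ∏ j ∈ univ.erase i, (1 : ℝ) / ((u j : ℝ)) ^ 2
      = ∑ u ∈ U, ∏ j, g j (u j) := Finset.sum_congr rfl (fun u _ => hprodg u)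
    _ ≤ ∑ u ∈ Fintype.piFinset A, ∏ j, g j (u j) :=
        Finset.sum_le_sum_of_subset_of_nonneg hsub
          (fun u _ _ => Finset.prod_nonneg (fun j _ => hgnn j (u j)))
    _ = ∏ j, ∑ m ∈ A j, g j m := (Finset.prod_univ_sum A g).symm
    _ ≤ ∏ j, (if j = i then (1:ℝ) else 4) := by
        refine Finset.prod_le_prod (fun j _ => Finset.sum_nonneg (fun m _ => hgnn j m))
          (fun j _ => ?_)
        by_cases hj : j = i
        · subst hj
          have hA0 : A j ⊆ {0} := by
            intro m hm
            obtain ⟨u, hu, rfl⟩ := Finset.mem_image.1 hm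
            obtain ⟨v, _, rfl⟩ := Finset.mem_image.1 hu
            simp [hFdef]
          have hcard : ∑ m ∈ A j, g j m = ((A j).card : ℝ) := by
            rw [hg]; simp
          rw [hcard, if_pos rfl]
          have := Finset.card_le_card hA0
          simp only [Finset.card_singleton] at this
          exact_mod_cast this
        · have heq : ∑ m ∈ A j, g j m = ∑ m ∈ A j, (1:ℝ) / (m : ℝ) ^ 2 :=
            Finset.sum_congr rfl (fun m _ => by rw [hg]; simp [hj])
          rw [heq, if_neg hj]
          refine sum_int_inv_sq_le _ (fun hc => ?_)
          obtain ⟨u, hu, hu0⟩ := Finset.mem_image.1 hc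
          obtain ⟨v, _, rfl⟩ := Finset.mem_image.1 hu
          have heq2 : F v j = v.1 j := by
            rw [hFdef]; exact Function.update_of_ne hj _ _
          rw [heq2] at hu0
          exact (hP v.1 v.2).2 j hu0
    _ = 4 ^ (k - 1) := by
        rw [← Finset.mul_prod_erase univ _ (mem_univ i), if_pos rfl, one_mul]
        have h4 : ∀ j ∈ univ.erase i, (if j = i then (1:ℝ) else 4) = 4 := fun j hj => by
          rw [if_neg (Finset.ne_of_mem_erase hj)]
        rw [Finset.prod_congr rfl h4, Finset.prod_const,
          Finset.card_erase_of_mem (mem_univ i), Finset.card_univ, Fintype.card_fin]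

/-- Tail convolution bound: for `k ≥ 1` there is `d_k > 0` such that for all `1 ≤ N ≤ M ≤ ∞`
and every nonzero `n`,
`Σ_{n₁+⋯+n_k = n, 1 ≤ |n_j| ≤ M, max_j |n_j| > N} ∏_j 1/n_j² ≤ d_k / max(N,|n|)²`. -/
theorem convolution_tail_sum_bound (k : ℕ) (hk : 1 ≤ k) :
    ∃ d : ℝ, 0 < d ∧ ∀ (N : ℕ), 1 ≤ N → ∀ M : ℕ∞, (N : ℕ∞) ≤ M → ∀ (n : ℤ), n ≠ 0 →
      (∑' v : {v : Fin k → ℤ //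
          (∑ j, v j) = n ∧ (∀ j, v j ≠ 0 ∧ ((v j).natAbs : ℕ∞) ≤ M) ∧
            ∃ j, N < (v j).natAbs},
        ∏ j, (1 : ℝ) / ((v : Fin k → ℤ) j : ℝ) ^ 2)
        ≤ d / max (N : ℝ) |(n : ℝ)| ^ 2 := by
  classical
  refine ⟨(k : ℝ) ^ 3 * 4 ^ (k - 1), by positivity, ?_⟩
  intro N hN M hM n hn
  set T : ℝ := max (N : ℝ) |(n : ℝ)| with hTdef
  have hT1 : (1 : ℝ) ≤ T := le_max_of_le_left (by exact_mod_cast hN)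
  have hT0 : (0 : ℝ) < T := by linarith
  have hkne : Nonempty (Fin k) := ⟨⟨0, hk⟩⟩
  have hmax : ∀ v : Fin k → ℤ, ∃ i, ∀ j, (v j).natAbs ≤ (v i).natAbs := fun v =>
    Finite.exists_max (fun j => (v j).natAbs)
  set J : (Fin k → ℤ) → Fin k := fun v => (hmax v).choose with hJdef
  have hJ : ∀ (v : Fin k → ℤ) (j : Fin k), (v j).natAbs ≤ (v (J v)).natAbs := fun v =>
    (hmax v).choose_spec
  set Pr : (Fin k → ℤ) → Prop := fun v =>
    (∑ j, v j) = n ∧ (∀ j, v j ≠ 0 ∧ ((v j).natAbs : ℕ∞) ≤ M) ∧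
      ∃ j, N < (v j).natAbs with hPr
  have hPr' : ∀ v, Pr v → (∑ j, v j) = n ∧ ∀ j, v j ≠ 0 :=
    fun v hv => ⟨hv.1, fun j => (hv.2.1 j).1⟩
  -- key pointwise bound on the maximal coordinate
  have key : ∀ v : {v : Fin k → ℤ // Pr v},
      (1 : ℝ) / ((v.1 (J v.1) : ℝ)) ^ 2 ≤ (k : ℝ) ^ 2 / T ^ 2 := by
    intro v
    obtain ⟨hsum, hnz, j1, hj1⟩ := v.2
    have habs : ∀ j, |(v.1 j : ℝ)| = ((v.1 j).natAbs : ℝ) := fun j => by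
      rw [Nat.cast_natAbs, Int.cast_abs]
    have hbigN : (N : ℝ) ≤ |(v.1 (J v.1) : ℝ)| := by
      rw [habs]
      have : N < (v.1 (J v.1)).natAbs := lt_of_lt_of_le hj1 (hJ v.1 j1)
      exact_mod_cast this.le
    have hbign : |(n : ℝ)| ≤ (k : ℝ) * |(v.1 (J v.1) : ℝ)| := by
      have h1 : |(n : ℝ)| = |((∑ j, v.1 j : ℤ) : ℝ)| := by rw [hsum]
      rw [h1]
      push_cast
      calc |∑ j, (v.1 j : ℝ)| ≤ ∑ j, |(v.1 j : ℝ)| := Finset.abs_sum_le_sum_abs _ _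
        _ ≤ ∑ _j : Fin k, |(v.1 (J v.1) : ℝ)| := by
            refine Finset.sum_le_sum (fun j _ => ?_)
            rw [habs, habs]
            exact_mod_cast hJ v.1 j
        _ = (k : ℝ) * |(v.1 (J v.1) : ℝ)| := by
            rw [Finset.sum_const, Finset.card_univ, Fintype.card_fin, nsmul_eq_mul]
    have hTk : T ≤ (k : ℝ) * |(v.1 (J v.1) : ℝ)| := by
      have hk1 : (1 : ℝ) ≤ (k : ℝ) := by exact_mod_cast hk
      have h0 : (0 : ℝ) ≤ |(v.1 (J v.1) : ℝ)| := abs_nonneg _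
      refine max_le ?_ hbign
      nlinarith
    have hvne : (v.1 (J v.1) : ℝ) ≠ 0 := by exact_mod_cast (hnz (J v.1)).1
    have hv2 : (0 : ℝ) < ((v.1 (J v.1) : ℝ)) ^ 2 := by positivity
    rw [div_le_div_iff₀ hv2 (by positivity)]
    have hsq : T ^ 2 ≤ ((k : ℝ) * |(v.1 (J v.1) : ℝ)|) ^ 2 :=
      pow_le_pow_left₀ (le_of_lt hT0) hTk 2
    calc (1:ℝ) * T ^ 2 = T ^ 2 := one_mul _
      _ ≤ ((k : ℝ) * |(v.1 (J v.1) : ℝ)|) ^ 2 := hsq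
      _ = (k : ℝ) ^ 2 * ((v.1 (J v.1) : ℝ)) ^ 2 := by rw [mul_pow, sq_abs]
  -- main estimate on finite sums
  refine tsum_le_of_sum_le' (by positivity) (fun s => ?_)
  calc ∑ v ∈ s, ∏ j, (1 : ℝ) / (v.1 j : ℝ) ^ 2
      ≤ ∑ v ∈ s, ((k : ℝ) ^ 2 / T ^ 2) *
          ∏ j ∈ univ.erase (J v.1), (1 : ℝ) / (v.1 j : ℝ) ^ 2 := by
        refine Finset.sum_le_sum (fun v _ => ?_)
        rw [← Finset.mul_prod_erase univ (fun j => (1 : ℝ) / (v.1 j : ℝ) ^ 2)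
          (mem_univ (J v.1))]
        exact mul_le_mul_of_nonneg_right (key v)
          (Finset.prod_nonneg (fun j _ => by positivity))
    _ = ((k : ℝ) ^ 2 / T ^ 2) * ∑ v ∈ s,
          ∏ j ∈ univ.erase (J v.1), (1 : ℝ) / (v.1 j : ℝ) ^ 2 := by
        rw [Finset.mul_sum]
    _ ≤ ((k : ℝ) ^ 2 / T ^ 2) * ((k : ℝ) * 4 ^ (k - 1)) := by
        refine mul_le_mul_of_nonneg_left ?_ (by positivity)
        calc ∑ v ∈ s, ∏ j ∈ univ.erase (J v.1),
              (1 : ℝ) / (v.1 j : ℝ) ^ 2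
            = ∑ i : Fin k, ∑ v ∈ s.filter (fun v => J v.1 = i),
                ∏ j ∈ univ.erase (J v.1), (1 : ℝ) / (v.1 j : ℝ) ^ 2 :=
              (Finset.sum_fiberwise_of_maps_to (fun v _ => mem_univ _) _).symm
          _ ≤ ∑ _i : Fin k, (4 : ℝ) ^ (k - 1) := by
              refine Finset.sum_le_sum (fun i _ => ?_)
              have heq : ∑ v ∈ s.filter (fun v => J v.1 = i),
                  ∏ j ∈ univ.erase (J v.1), (1 : ℝ) / (v.1 j : ℝ) ^ 2
                  = ∑ v ∈ s.filter (fun v => J v.1 = i),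
                  ∏ j ∈ univ.erase i, (1 : ℝ) / (v.1 j : ℝ) ^ 2 := by
                refine Finset.sum_congr rfl (fun v hv => ?_)
                rw [(Finset.mem_filter.1 hv).2]
              rw [heq]
              exact sum_prod_erase_le Pr n hPr' i _
          _ = (k : ℝ) * 4 ^ (k - 1) := by
              rw [Finset.sum_const, Finset.card_univ, Fintype.card_fin, nsmul_eq_mul]
    _ = (k : ℝ) ^ 3 * 4 ^ (k - 1) / T ^ 2 := by
        field_simp
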